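/- For all real numbers r1, r2 ≥ 0 with (r1, r2) ≠ (0, 0), one has 2 · Re ∫₀^∞ (1 + 16 t²)^{−1/2} · exp(−(1/√2)·(r1·√(1 + 4it) + r2·√(1 − 4it))) dt = K₀(√(r1² + r2²)), where the complex square roots are principal-branch square roots. -/

import Mathlib

open MeasureTheory

noncomputable section

/-- The modified Bessel function of the second kind `K₀`, via its integral representation
`K₀(z) = ∫₁^∞ e^{−zt} (t² − 1)^{−1/2} dt`. -/
def K0 (z : ℝ) : ℝ := ∫ t in Set.Ioi (1:ℝ), Real.exp (-z*t) / Real.sqrt (t^2 - 1)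

/-- Principal-branch complex square root. -/
def csqrt (z : ℂ) : ℂ := z ^ ((1:ℂ)/2)

open Set Real Filter

/-! ### Auxiliary lemmas -/

section helpers

lemma abs_le_cosh (x : ℝ) : |x| ≤ Real.cosh x := by
  calc |x| ≤ Real.sinh |x| := by
        rcases eq_or_lt_of_le (abs_nonneg x) with h | h
        · simp [← h]
        · exact (Real.self_lt_sinh_iff.2 h).le
    _ ≤ Real.cosh |x| := by nlinarith [Real.cosh_sq_sub_sinh_sq |x|, Real.cosh_pos |x|]
    _ = Real.cosh x := Real.cosh_abs x

lemma integrable_exp_neg_abs (k : ℝ) (hk : 0 < k) :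
    Integrable (fun x : ℝ => Real.exp (-k * |x|)) := by
  have h2 : IntegrableOn (fun x : ℝ => Real.exp (-k * |x|)) (Ioi 0) :=
    (exp_neg_integrableOn_Ioi 0 hk).congr_fun (fun x hx => by rw [abs_of_pos hx]) measurableSet_Ioi
  have h3 : IntegrableOn (fun x : ℝ => Real.exp (-k * |x|)) (Iio 0) := by
    have := (MeasurePreserving.integrableOn_comp_preimage
      (Measure.measurePreserving_neg (volume : Measure ℝ))
      (Homeomorph.neg ℝ).measurableEmbedding).2 h2
    simpa [Function.comp_def, Set.neg_Ioi] using this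
  have h4 : IntegrableOn (fun x : ℝ => Real.exp (-k * |x|)) ({(0:ℝ)}) := by
    rw [IntegrableOn, Measure.restrict_singleton]
    simp
  have := (h3.union h4).union h2
  rwa [Iio_union_right, Iic_union_Ioi, integrableOn_univ] at this

lemma integrable_exp_neg_cosh (k : ℝ) (hk : 0 < k) :
    Integrable (fun x : ℝ => Real.exp (-k * Real.cosh x)) := by
  refine (integrable_exp_neg_abs k hk).mono ?_ ?_
  · exact (Real.continuous_exp.comp
      (continuous_const.mul Real.continuous_cosh)).aestronglyMeasurable
  · refine Filter.Eventually.of_forall fun x => ?_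
    simp only [Real.norm_eq_abs, Real.abs_exp]
    exact Real.exp_le_exp.2 (by nlinarith [abs_le_cosh x])

lemma cosh_add_mul_I (x y : ℝ) : Complex.cosh (x + y * Complex.I) =
    (Real.cosh x * Real.cos y : ℝ) + (Real.sinh x * Real.sin y : ℝ) * Complex.I := by
  rw [Complex.cosh_add, Complex.cosh_mul_I, Complex.sinh_mul_I]
  push_cast [Complex.ofReal_cosh, Complex.ofReal_sinh, Complex.ofReal_cos, Complex.ofReal_sin]
  ring

lemma sinh_add_mul_I (x y : ℝ) : Complex.sinh (x + y * Complex.I) =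
    (Real.sinh x * Real.cos y : ℝ) + (Real.cosh x * Real.sin y : ℝ) * Complex.I := by
  rw [Complex.sinh_add, Complex.cosh_mul_I, Complex.sinh_mul_I]
  push_cast [Complex.ofReal_cosh, Complex.ofReal_sinh, Complex.ofReal_cos, Complex.ofReal_sin]
  ring

lemma norm_exp_neg_c_cosh (c x y : ℝ) :
    ‖Complex.exp (-(c:ℂ) * Complex.cosh (x + y * Complex.I))‖
      = Real.exp (-(c * Real.cos y) * Real.cosh x) := by
  rw [Complex.norm_exp, cosh_add_mul_I]
  congr 1
  simp [Complex.mul_re, ← Complex.ofReal_cos, ← Complex.ofReal_sin]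
  ring

lemma norm_sinh_le (x y : ℝ) : ‖Complex.sinh (x + y * Complex.I)‖ ≤ Real.cosh x := by
  rw [sinh_add_mul_I]
  have h : ‖((Real.sinh x * Real.cos y : ℝ) + (Real.cosh x * Real.sin y : ℝ) * Complex.I : ℂ)‖
      = Real.sqrt ((Real.sinh x * Real.cos y)^2 + (Real.cosh x * Real.sin y)^2) := by
    rw [Complex.norm_def, Complex.normSq_add_mul_I]
  rw [h]
  have h2 : (Real.sinh x * Real.cos y)^2 + (Real.cosh x * Real.sin y)^2 ≤ (Real.cosh x)^2 := by
    nlinarith [Real.sin_sq_add_cos_sq y, Real.cosh_sq_sub_sinh_sq x, Real.sin_sq_le_one y,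
      Real.cos_sq_le_one y, sq_nonneg (Real.sinh x), Real.cosh_pos x]
  calc Real.sqrt ((Real.sinh x * Real.cos y)^2 + (Real.cosh x * Real.sin y)^2)
      ≤ Real.sqrt ((Real.cosh x)^2) := Real.sqrt_le_sqrt h2
    _ = Real.cosh x := Real.sqrt_sq (Real.cosh_pos x).le

lemma hasDerivAt_inner (c : ℂ) (ξ x : ℝ) :
    HasDerivAt (fun b : ℝ => Complex.exp (-c * Complex.cosh (ξ + b * Complex.I)))
      (Complex.exp (-c * Complex.cosh (ξ + x * Complex.I)) *
        (-c * (Complex.sinh (ξ + x * Complex.I) * Complex.I))) x := by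
  have h1 : HasDerivAt (fun b : ℝ => (ξ : ℂ) + b * Complex.I) Complex.I x := by
    simpa using ((Complex.ofRealCLM.hasDerivAt (x := x)).mul_const Complex.I).const_add (ξ:ℂ)
  have h2 := (Complex.hasDerivAt_cosh ((ξ:ℂ) + x * Complex.I)).scomp x h1
  have h3 := h2.const_mul (-c)
  have h4 := h3.cexp
  simp only [Function.comp_def, smul_eq_mul] at h4
  convert h4 using 1
  ring

lemma hasDerivAt_inner' (c : ℂ) (b : ℝ) (x : ℝ) :
    HasDerivAt (fun ξ : ℝ => Complex.exp (-c * Complex.cosh (ξ + b * Complex.I)))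
      (Complex.exp (-c * Complex.cosh (x + b * Complex.I)) *
        (-c * Complex.sinh (x + b * Complex.I))) x := by
  have h1 : HasDerivAt (fun ξ : ℝ => (ξ : ℂ) + b * Complex.I) 1 x := by
    simpa using (Complex.ofRealCLM.hasDerivAt (x := x)).add_const ((b:ℝ) * Complex.I)
  have h2 := (Complex.hasDerivAt_cosh ((x:ℂ) + b * Complex.I)).scomp x h1
  have h3 := h2.const_mul (-c)
  have h4 := h3.cexp
  simp only [Function.comp_def, smul_eq_mul] at h4
  convert h4 using 1
  ring

lemma cont_aux (c : ℂ) (b : ℝ) :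
    Continuous (fun ξ : ℝ => Complex.exp (-c * Complex.cosh (ξ + b * Complex.I))) := by
  fun_prop

lemma cont_aux2 (c : ℂ) (b : ℝ) :
    Continuous (fun ξ : ℝ => Complex.exp (-c * Complex.cosh (ξ + b * Complex.I)) *
      (-c * Complex.sinh (ξ + b * Complex.I))) := by
  fun_prop

end helpers

section shift
variable {c : ℝ}

lemma integrable_F (hc : 0 < c) {b B : ℝ} (hB : B < π/2) (hbB : |b| ≤ B) :
    Integrable (fun ξ : ℝ => Complex.exp (-(c:ℂ) * Complex.cosh (ξ + b * Complex.I))) := by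
  have hB0 : 0 ≤ B := le_trans (abs_nonneg b) hbB
  have hκ : 0 < Real.cos B := Real.cos_pos_of_mem_Ioo ⟨by linarith, hB⟩
  refine ((integrable_exp_neg_cosh (c * Real.cos B) (mul_pos hc hκ)).mono ?_ ?_)
  · exact (cont_aux _ _).aestronglyMeasurable
  · refine Filter.Eventually.of_forall fun x => ?_
    rw [norm_exp_neg_c_cosh, Real.norm_eq_abs, Real.abs_exp]
    apply Real.exp_le_exp.2
    have hcosb : Real.cos B ≤ Real.cos b := by
      rw [← Real.cos_abs b]
      exact Real.cos_le_cos_of_nonneg_of_le_pi (abs_nonneg b) (by linarith [Real.pi_pos]) hbB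
    have h3 := Real.cosh_pos x
    nlinarith [mul_le_mul_of_nonneg_right (mul_le_mul_of_nonneg_left hcosb hc.le) h3.le]

lemma integrable_F' (hc : 0 < c) {b B : ℝ} (hB : B < π/2) (hbB : |b| ≤ B) :
    Integrable (fun ξ : ℝ => Complex.exp (-(c:ℂ) * Complex.cosh (ξ + b * Complex.I)) *
      (-(c:ℂ) * Complex.sinh (ξ + b * Complex.I))) := by
  have hB0 : 0 ≤ B := le_trans (abs_nonneg b) hbB
  have hκ : 0 < Real.cos B := Real.cos_pos_of_mem_Ioo ⟨by linarith, hB⟩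
  set k := c * Real.cos B with hkdef
  have hk : 0 < k := mul_pos hc hκ
  refine (((integrable_exp_neg_cosh (k/2) (by linarith)).const_mul (2*c/k)).mono ?_ ?_)
  · exact (cont_aux2 _ _).aestronglyMeasurable
  · refine Filter.Eventually.of_forall fun x => ?_
    rw [norm_mul, norm_exp_neg_c_cosh]
    have hcosb : Real.cos B ≤ Real.cos b := by
      rw [← Real.cos_abs b]
      exact Real.cos_le_cos_of_nonneg_of_le_pi (abs_nonneg b) (by linarith [Real.pi_pos]) hbB
    have h1 : ‖-(c:ℂ) * Complex.sinh (x + b * Complex.I)‖ ≤ c * Real.cosh x := by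
      rw [norm_mul, norm_neg, Complex.norm_real]
      have : ‖Complex.sinh ((x:ℂ) + b * Complex.I)‖ ≤ Real.cosh x := norm_sinh_le x b
      rw [Real.norm_eq_abs, abs_of_pos hc]
      exact mul_le_mul_of_nonneg_left this hc.le
    have hcx := Real.cosh_pos x
    have step1 : Real.exp (-(c * Real.cos b) * Real.cosh x) *
        ‖-(c:ℂ) * Complex.sinh (x + b * Complex.I)‖
        ≤ Real.exp (-k * Real.cosh x) * (c * Real.cosh x) := by
      apply mul_le_mul _ h1 (norm_nonneg _) (Real.exp_pos _).le
      apply Real.exp_le_exp.2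
      nlinarith [mul_le_mul_of_nonneg_right (mul_le_mul_of_nonneg_left hcosb hc.le) hcx.le]
    refine step1.trans ?_
    rw [Real.norm_eq_abs, abs_of_pos (by positivity : (0:ℝ) < 2*c/k * Real.exp (-(k/2) * Real.cosh x))]
    have key : k/2 * Real.cosh x ≤ Real.exp (k/2 * Real.cosh x) :=
      (Real.add_one_le_exp _).trans' (by linarith)
    rw [show -k * Real.cosh x = -(k/2 * Real.cosh x) + -(k/2 * Real.cosh x) by ring,
      Real.exp_add]
    have e1 : Real.exp (-(k/2 * Real.cosh x)) * (c * Real.cosh x)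
        ≤ 2*c/k := by
      rw [Real.exp_neg]
      rw [inv_mul_le_iff₀ (Real.exp_pos _)]
      calc c * Real.cosh x = (2*c/k) * (k/2 * Real.cosh x) := by field_simp
        _ ≤ (2*c/k) * Real.exp (k/2 * Real.cosh x) := by
            apply mul_le_mul_of_nonneg_left key (by positivity)
        _ = Real.exp (k/2 * Real.cosh x) * (2*c/k) := by ring
    calc Real.exp (-(k/2 * Real.cosh x)) * Real.exp (-(k/2 * Real.cosh x)) * (c * Real.cosh x)
        = Real.exp (-(k/2 * Real.cosh x)) * (Real.exp (-(k/2 * Real.cosh x)) * (c * Real.cosh x)) := by ring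
      _ ≤ Real.exp (-(k/2 * Real.cosh x)) * (2*c/k) := by
          apply mul_le_mul_of_nonneg_left e1 (Real.exp_pos _).le
      _ = 2*c/k * Real.exp (-(k/2) * Real.cosh x) := by rw [show -(k/2) * Real.cosh x = -(k/2 * Real.cosh x) by ring]; ring
end shift

section shift2
variable {c : ℝ}

lemma tendsto_F_zero (hc : 0 < c) {b : ℝ} (hb : |b| < π/2) {l : Filter ℝ}
    (hl : Tendsto (fun ξ : ℝ => |ξ|) l atTop) :
    Tendsto (fun ξ : ℝ => Complex.exp (-(c:ℂ) * Complex.cosh (ξ + b * Complex.I))) l (nhds 0) := by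
  have hb0 : 0 ≤ |b| := abs_nonneg b
  have hκ : 0 < Real.cos b := Real.cos_pos_of_mem_Ioo ⟨by cases abs_lt.1 hb; linarith, (abs_lt.1 hb).2⟩
  rw [tendsto_zero_iff_norm_tendsto_zero]
  simp only [norm_exp_neg_c_cosh]
  have h1 : Tendsto (fun ξ : ℝ => Real.cosh ξ) l atTop :=
    tendsto_atTop_mono (fun ξ => abs_le_cosh ξ) hl
  have h2 : Tendsto (fun ξ : ℝ => -(c * Real.cos b) * Real.cosh ξ) l atBot :=
    Tendsto.const_mul_atTop_of_neg (by nlinarith) h1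
  exact Real.tendsto_exp_atBot.comp h2

lemma integral_deriv_zero (hc : 0 < c) {b : ℝ} (hb : |b| < π/2) :
    ∫ ξ : ℝ, Complex.exp (-(c:ℂ) * Complex.cosh (ξ + b * Complex.I)) *
      (-(c:ℂ) * Complex.sinh (ξ + b * Complex.I)) = 0 := by
  set h : ℝ → ℂ := fun ξ => Complex.exp (-(c:ℂ) * Complex.cosh (ξ + b * Complex.I)) with hh
  set h' : ℝ → ℂ := fun ξ => Complex.exp (-(c:ℂ) * Complex.cosh (ξ + b * Complex.I)) *
      (-(c:ℂ) * Complex.sinh (ξ + b * Complex.I)) with hh'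
  have hint : Integrable h' := integrable_F' hc (by linarith [hb]) le_rfl
  have hderiv : ∀ x : ℝ, HasDerivAt h (h' x) x := fun x => hasDerivAt_inner' (c:ℂ) b x
  have htop : Tendsto h atTop (nhds 0) := tendsto_F_zero hc hb tendsto_abs_atTop_atTop
  have hbot : Tendsto h atBot (nhds 0) := tendsto_F_zero hc hb tendsto_abs_atBot_atTop
  have hIoi : ∫ ξ in Ioi (0:ℝ), h' ξ = 0 - h 0 :=
    integral_Ioi_of_hasDerivAt_of_tendsto' (fun x _ => hderiv x) hint.integrableOn htop
  have hIic : ∫ ξ in Iic (0:ℝ), h' ξ = h 0 - 0 :=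
    integral_Iic_of_hasDerivAt_of_tendsto' (fun x _ => hderiv x) hint.integrableOn hbot
  have hsplit := integral_add_compl (measurableSet_Iic (a := (0:ℝ))) hint
  rw [compl_Iic] at hsplit
  rw [← hsplit, hIoi, hIic]
  ring

set_option maxHeartbeats 1000000 in
lemma hasDerivAt_G (hc : 0 < c) {b₀ : ℝ} (hb₀ : |b₀| < π/2) :
    HasDerivAt (fun b : ℝ => ∫ ξ : ℝ, Complex.exp (-(c:ℂ) * Complex.cosh (ξ + b * Complex.I)))
      0 b₀ := by
  set B : ℝ := (|b₀| + π/2)/2 with hBdef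
  have hb₀B : |b₀| < B := by rw [hBdef]; linarith
  have hB : B < π/2 := by rw [hBdef]; linarith [abs_nonneg b₀]
  have hB0 : 0 ≤ B := le_trans (abs_nonneg b₀) hb₀B.le
  have hκ : 0 < Real.cos B := Real.cos_pos_of_mem_Ioo ⟨by linarith, hB⟩
  set k := c * Real.cos B with hkdef
  have hk : 0 < k := mul_pos hc hκ
  set ε := B - |b₀| with hε
  have hεpos : 0 < ε := by linarith
  set F : ℝ → ℝ → ℂ := fun b ξ => Complex.exp (-(c:ℂ) * Complex.cosh (ξ + b * Complex.I)) with hF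
  set F' : ℝ → ℝ → ℂ := fun b ξ => Complex.exp (-(c:ℂ) * Complex.cosh (ξ + b * Complex.I)) *
      (-(c:ℂ) * (Complex.sinh (ξ + b * Complex.I) * Complex.I)) with hF'
  set bound := fun ξ : ℝ => Real.exp (-k * Real.cosh ξ) * (c * Real.cosh ξ) with hbound
  have hF_meas : ∀ᶠ b in nhds b₀, AEStronglyMeasurable (F b) volume :=
    Filter.Eventually.of_forall fun b => (cont_aux _ _).aestronglyMeasurable
  have hF_int : Integrable (F b₀) volume := integrable_F hc hB hb₀B.le
  have hF'_meas : AEStronglyMeasurable (F' b₀) volume := by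
    apply Continuous.aestronglyMeasurable
    have := (cont_aux2 (c:ℂ) b₀).mul (continuous_const (y := Complex.I))
    refine Continuous.congr this fun ξ => ?_
    simp only [hF', Pi.mul_apply]
    ring
  have h_bound : ∀ᵐ ξ ∂(volume : Measure ℝ), ∀ b ∈ Metric.ball b₀ ε, ‖F' b ξ‖ ≤ bound ξ := by
    refine Filter.Eventually.of_forall fun ξ => fun x hx => ?_
    have hxB : |x| ≤ B := by
      have := abs_sub_abs_le_abs_sub x b₀
      rw [Metric.mem_ball, Real.dist_eq] at hx
      linarith [hx.le]
    have hcosb : Real.cos B ≤ Real.cos x := by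
      rw [← Real.cos_abs x]
      exact Real.cos_le_cos_of_nonneg_of_le_pi (abs_nonneg x) (by linarith [Real.pi_pos]) hxB
    show ‖Complex.exp (-(c:ℂ) * Complex.cosh (ξ + x * Complex.I)) *
      (-(c:ℂ) * (Complex.sinh (ξ + x * Complex.I) * Complex.I))‖ ≤ bound ξ
    rw [norm_mul, norm_exp_neg_c_cosh]
    have hcx := Real.cosh_pos ξ
    have h1 : ‖-(c:ℂ) * (Complex.sinh (ξ + x * Complex.I) * Complex.I)‖ ≤ c * Real.cosh ξ := by
      rw [norm_mul, norm_mul, Complex.norm_I, mul_one, norm_neg, Complex.norm_real,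
        Real.norm_eq_abs, abs_of_pos hc]
      exact mul_le_mul_of_nonneg_left (norm_sinh_le ξ x) hc.le
    calc Real.exp (-(c * Real.cos x) * Real.cosh ξ) *
          ‖-(c:ℂ) * (Complex.sinh (ξ + x * Complex.I) * Complex.I)‖
        ≤ Real.exp (-k * Real.cosh ξ) * (c * Real.cosh ξ) := by
          apply mul_le_mul _ h1 (norm_nonneg _) (Real.exp_pos _).le
          apply Real.exp_le_exp.2
          nlinarith [mul_le_mul_of_nonneg_right (mul_le_mul_of_nonneg_left hcosb hc.le) hcx.le]
      _ = bound ξ := rfl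
  have bound_int : Integrable bound volume := by
    refine (((integrable_exp_neg_cosh (k/2) (by linarith)).const_mul (2*c/k)).mono ?_ ?_)
    · apply Continuous.aestronglyMeasurable
      fun_prop
    · refine Filter.Eventually.of_forall fun x => ?_
      have hcx := Real.cosh_pos x
      rw [Real.norm_eq_abs, abs_of_nonneg (by positivity : (0:ℝ) ≤ bound x),
        Real.norm_eq_abs, abs_of_pos (by positivity : (0:ℝ) < 2*c/k * Real.exp (-(k/2) * Real.cosh x))]
      have key2 : k/2 * Real.cosh x ≤ Real.exp (k/2 * Real.cosh x) :=
        (Real.add_one_le_exp _).trans' (by linarith)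
      have e1 : Real.exp (-(k/2 * Real.cosh x)) * (c * Real.cosh x) ≤ 2*c/k := by
        rw [Real.exp_neg, inv_mul_le_iff₀ (Real.exp_pos _)]
        calc c * Real.cosh x = (2*c/k) * (k/2 * Real.cosh x) := by field_simp
          _ ≤ (2*c/k) * Real.exp (k/2 * Real.cosh x) := by
              apply mul_le_mul_of_nonneg_left key2 (by positivity)
          _ = Real.exp (k/2 * Real.cosh x) * (2*c/k) := by ring
      show Real.exp (-k * Real.cosh x) * (c * Real.cosh x) ≤ _
      rw [show -k * Real.cosh x = -(k/2 * Real.cosh x) + -(k/2 * Real.cosh x) by ring,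
        Real.exp_add]
      calc Real.exp (-(k/2 * Real.cosh x)) * Real.exp (-(k/2 * Real.cosh x)) * (c * Real.cosh x)
          = Real.exp (-(k/2 * Real.cosh x)) * (Real.exp (-(k/2 * Real.cosh x)) * (c * Real.cosh x)) := by
            ring
        _ ≤ Real.exp (-(k/2 * Real.cosh x)) * (2*c/k) := by
            apply mul_le_mul_of_nonneg_left e1 (Real.exp_pos _).le
        _ = 2*c/k * Real.exp (-(k/2) * Real.cosh x) := by
            rw [show -(k/2) * Real.cosh x = -(k/2 * Real.cosh x) by ring]; ring
  have h_diff : ∀ᵐ ξ ∂(volume : Measure ℝ), ∀ b ∈ Metric.ball b₀ ε, HasDerivAt (F · ξ) (F' b ξ) b :=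
    Filter.Eventually.of_forall fun ξ => fun x _ => hasDerivAt_inner (c:ℂ) ξ x
  have key := hasDerivAt_integral_of_dominated_loc_of_deriv_le (Metric.ball_mem_nhds b₀ hεpos) hF_meas hF_int hF'_meas
    h_bound bound_int h_diff
  have h0 := key.2
  have hzero : (∫ ξ : ℝ, F' b₀ ξ) = 0 := by
    have hz := integral_deriv_zero hc hb₀
    calc (∫ ξ : ℝ, F' b₀ ξ)
        = (∫ ξ : ℝ, Complex.exp (-(c:ℂ) * Complex.cosh (ξ + b₀ * Complex.I)) *
          (-(c:ℂ) * Complex.sinh (ξ + b₀ * Complex.I))) * Complex.I := by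
          rw [← integral_mul_const]
          congr 1
          ext ξ
          show Complex.exp (-(c:ℂ) * Complex.cosh (ξ + b₀ * Complex.I)) *
            (-(c:ℂ) * (Complex.sinh (ξ + b₀ * Complex.I) * Complex.I)) = _
          ring
      _ = 0 := by rw [hz, zero_mul]
  rwa [hzero] at h0

set_option maxHeartbeats 1000000 in
lemma integral_shift (hc : 0 < c) {β : ℝ} (hβ : |β| < π/2) :
    (∫ ξ : ℝ, Complex.exp (-(c:ℂ) * Complex.cosh (ξ + β * Complex.I)))
      = ∫ ξ : ℝ, Complex.exp (-(c:ℂ) * Complex.cosh (ξ : ℂ)) := by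
  set G := fun b : ℝ => ∫ ξ : ℝ, Complex.exp (-(c:ℂ) * Complex.cosh (ξ + b * Complex.I)) with hG
  have key : ∀ b : ℝ, |b| < π/2 → HasDerivAt G 0 b := fun b hb => hasDerivAt_G hc hb
  have h0 : G β = G 0 := by
    rcases le_or_gt 0 β with hβ0 | hβ0
    · have := constant_of_has_deriv_right_zero (f := G) (a := 0) (b := β)
        (fun x hx => ((key x (by rw [abs_lt]; constructor <;>
          [linarith [hx.1, Real.pi_pos]; linarith [hx.2, (abs_lt.1 hβ).2, abs_of_nonneg hβ0]])).continuousAt).continuousWithinAt)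
        (fun x hx => (key x (by rw [abs_lt]; constructor <;>
          [linarith [hx.1, Real.pi_pos]; linarith [hx.2.le, (abs_lt.1 hβ).2, abs_of_nonneg hβ0]])).hasDerivWithinAt)
      exact this β (right_mem_Icc.2 hβ0)
    · have := constant_of_has_deriv_right_zero (f := G) (a := β) (b := 0)
        (fun x hx => ((key x (by rw [abs_lt]; constructor <;>
          [linarith [hx.1, (abs_lt.1 hβ).1]; linarith [hx.2, Real.pi_pos]])).continuousAt).continuousWithinAt)
        (fun x hx => (key x (by rw [abs_lt]; constructor <;>
          [linarith [hx.1, (abs_lt.1 hβ).1]; linarith [hx.2, Real.pi_pos]])).hasDerivWithinAt)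
      exact (this 0 (right_mem_Icc.2 hβ0.le)).symm
  have h1 : G 0 = ∫ ξ : ℝ, Complex.exp (-(c:ℂ) * Complex.cosh (ξ:ℂ)) := by
    rw [hG]
    norm_num
  rw [show (∫ ξ : ℝ, Complex.exp (-(c:ℂ) * Complex.cosh (ξ + β * Complex.I))) = G β from rfl,
    h0, h1]
end shift2

section halfline
variable {c : ℝ}

lemma u_neg (c β ξ : ℝ) : Complex.exp (-(c:ℂ) * Complex.cosh ((-ξ:ℝ) + β*Complex.I))
    = starRingEnd ℂ (Complex.exp (-(c:ℂ) * Complex.cosh (ξ + β*Complex.I))) := by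
  rw [← Complex.exp_conj]
  congr 1
  rw [cosh_add_mul_I, cosh_add_mul_I]
  simp only [map_mul, map_add, map_neg, Complex.conj_ofReal, Real.cosh_neg, Real.sinh_neg,
    Complex.conj_I]
  push_cast
  ring

lemma even_cosh_integral (hc : 0 < c) :
    ∫ ξ : ℝ, Real.exp (-c * Real.cosh ξ) = 2 * ∫ ξ in Set.Ioi (0:ℝ), Real.exp (-c * Real.cosh ξ) := by
  have hint := integrable_exp_neg_cosh c hc
  have hsplit := integral_add_compl (measurableSet_Iic (a := (0:ℝ))) hint
  rw [compl_Iic] at hsplit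
  have hIic : ∫ ξ in Set.Iic (0:ℝ), Real.exp (-c * Real.cosh ξ)
      = ∫ ξ in Set.Ioi (0:ℝ), Real.exp (-c * Real.cosh ξ) := by
    rw [show (0:ℝ) = -0 by norm_num, ← integral_comp_neg_Ioi]
    simp [Real.cosh_neg]
  rw [← hsplit, hIic]
  ring

lemma cos_integral (a b : ℝ) (ha : 0 < a) :
    ∫ ξ in Set.Ioi (0:ℝ), Real.exp (-(a * Real.cosh ξ)) * Real.cos (b * Real.sinh ξ)
      = ∫ ξ in Set.Ioi (0:ℝ), Real.exp (-(Real.sqrt (a^2+b^2) * Real.cosh ξ)) := by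
  set c := Real.sqrt (a^2+b^2) with hcdef
  have hc : 0 < c := Real.sqrt_pos.2 (by positivity)
  have hc2 : c^2 = a^2 + b^2 := Real.sq_sqrt (by positivity)
  have hbc : |b| < c := by
    nlinarith [abs_nonneg b, sq_abs b]
  have hbc1 : -1 < b/c := by rw [lt_div_iff₀ hc]; nlinarith [abs_lt.1 hbc]
  have hbc2 : b/c < 1 := by rw [div_lt_one hc]; nlinarith [abs_lt.1 hbc]
  set β := Real.arcsin (b/c) with hβdef
  have hβ : |β| < π/2 := abs_lt.2 ⟨Real.neg_pi_div_two_lt_arcsin.2 hbc1,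
    Real.arcsin_lt_pi_div_two.2 hbc2⟩
  have hsin : Real.sin β = b/c := Real.sin_arcsin hbc1.le hbc2.le
  have hcos : Real.cos β = a/c := by
    rw [hβdef, Real.cos_arcsin]
    rw [show 1 - (b/c)^2 = (a/c)^2 by field_simp; nlinarith]
    exact Real.sqrt_sq (by positivity)
  set u : ℝ → ℂ := fun ξ => Complex.exp (-(c:ℂ) * Complex.cosh (ξ + β*Complex.I)) with hu
  have h_int_u : Integrable u := integrable_F hc (by linarith [hβ]) le_rfl
  have hIic : ∫ ξ in Set.Iic (0:ℝ), u ξ = starRingEnd ℂ (∫ ξ in Set.Ioi (0:ℝ), u ξ) := by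
    have h2 := integral_comp_neg_Ioi (0:ℝ) u
    rw [neg_zero] at h2
    calc ∫ ξ in Set.Iic (0:ℝ), u ξ = ∫ ξ in Set.Ioi (0:ℝ), u (-ξ) := h2.symm
      _ = ∫ ξ in Set.Ioi (0:ℝ), starRingEnd ℂ (u ξ) := by
          refine setIntegral_congr_fun measurableSet_Ioi fun ξ _ => ?_
          rw [hu]
          exact_mod_cast u_neg c β ξ
      _ = starRingEnd ℂ (∫ ξ in Set.Ioi (0:ℝ), u ξ) := integral_conj
  have hsplit := integral_add_compl (measurableSet_Iic (a := (0:ℝ))) h_int_u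
  rw [compl_Iic] at hsplit
  have h2re : (∫ ξ : ℝ, u ξ) = 2 * ((∫ ξ in Set.Ioi (0:ℝ), u ξ).re : ℂ) := by
    rw [← hsplit, hIic, add_comm]
    rw [Complex.add_conj]
    norm_num
  have hre : (∫ ξ in Set.Ioi (0:ℝ), u ξ).re
      = ∫ ξ in Set.Ioi (0:ℝ), Real.exp (-(a * Real.cosh ξ)) * Real.cos (b * Real.sinh ξ) := by
    rw [show (∫ ξ in Set.Ioi (0:ℝ), u ξ).re
        = ∫ ξ in Set.Ioi (0:ℝ), (u ξ).re from (by simpa using (integral_re h_int_u.integrableOn).symm)]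
    refine setIntegral_congr_fun measurableSet_Ioi fun ξ _ => ?_
    rw [hu]
    simp only
    rw [cosh_add_mul_I]
    have : (-(c:ℂ) * ((Real.cosh ξ * Real.cos β : ℝ) + (Real.sinh ξ * Real.sin β : ℝ) * Complex.I))
        = Complex.ofReal (-(a * Real.cosh ξ)) + Complex.ofReal (-(b * Real.sinh ξ)) * Complex.I := by
      rw [hcos, hsin]
      push_cast
      have : (c:ℂ) ≠ 0 := Complex.ofReal_ne_zero.2 hc.ne'
      field_simp
      ring
    rw [this, Complex.exp_re]
    simp only [Complex.add_re, Complex.ofReal_re, Complex.mul_re, Complex.I_re, Complex.I_im,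
      Complex.ofReal_im, Complex.add_im, Complex.mul_im]
    norm_num
  have hR : (∫ ξ : ℝ, u ξ) = ((2 * ∫ ξ in Set.Ioi (0:ℝ), Real.exp (-(c * Real.cosh ξ)) : ℝ) : ℂ) := by
    rw [hu]
    rw [integral_shift hc hβ]
    have : ∀ ξ : ℝ, Complex.exp (-(c:ℂ) * Complex.cosh (ξ:ℂ))
        = ((Real.exp (-c * Real.cosh ξ) : ℝ) : ℂ) := by
      intro ξ
      rw [← Complex.ofReal_cosh]
      push_cast
      rfl
    rw [integral_congr_ae (Filter.Eventually.of_forall this)]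
    have hcast : (∫ ξ : ℝ, ((Real.exp (-c * Real.cosh ξ) : ℝ) : ℂ))
        = ((∫ ξ : ℝ, Real.exp (-c * Real.cosh ξ) : ℝ) : ℂ) := integral_ofReal
    rw [hcast]
    norm_cast
    have := even_cosh_integral hc
    simp only [neg_mul] at this ⊢
    linarith [this]
  have final := h2re.symm.trans hR
  rw [hre] at final
  have h2ne : (2:ℂ) ≠ 0 := by norm_num
  have final2 : ((∫ ξ in Set.Ioi (0:ℝ), Real.exp (-(a * Real.cosh ξ)) * Real.cos (b * Real.sinh ξ) : ℝ) : ℂ)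
      = ((∫ ξ in Set.Ioi (0:ℝ), Real.exp (-(c * Real.cosh ξ)) : ℝ) : ℂ) := by
    apply mul_left_cancel₀ h2ne
    rw [final]
    push_cast
    ring
  exact_mod_cast final2
end halfline

lemma K0_eq (c : ℝ) :
    K0 c = ∫ ξ in Set.Ioi (0:ℝ), Real.exp (-(c * Real.cosh ξ)) := by
  have himg : Real.cosh '' (Set.Ioi 0) = Set.Ioi 1 := by
    apply Subset.antisymm
    · rintro y ⟨x, hx, rfl⟩
      exact Real.one_lt_cosh.2 (ne_of_gt hx)
    · intro y hy
      rw [mem_Ioi] at hy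
      have hy1 : 0 < y^2 - 1 := by nlinarith
      refine ⟨Real.arsinh (Real.sqrt (y^2-1)), ?_, ?_⟩
      · rw [mem_Ioi, Real.arsinh_pos_iff]
        positivity
      · rw [Real.cosh_arsinh, Real.sq_sqrt hy1.le]
        rw [show 1 + (y^2 - 1) = y^2 by ring]
        exact Real.sqrt_sq (by linarith)
  have hinj : InjOn Real.cosh (Set.Ioi 0) := by
    intro x hx y hy hxy
    rw [mem_Ioi] at hx hy
    by_contra hne
    rcases lt_or_gt_of_ne hne with h | h
    · have := Real.cosh_lt_cosh.2 (show |x| < |y| by rw [abs_of_pos hx, abs_of_pos hy]; exact h)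
      linarith
    · have := Real.cosh_lt_cosh.2 (show |y| < |x| by rw [abs_of_pos hx, abs_of_pos hy]; exact h)
      linarith
  have := integral_image_eq_integral_abs_deriv_smul measurableSet_Ioi
    (fun x _ => (Real.hasDerivAt_cosh x).hasDerivWithinAt) hinj
    (fun u => Real.exp (-c*u) / Real.sqrt (u^2-1))
  rw [himg] at this
  rw [K0, this]
  refine setIntegral_congr_fun measurableSet_Ioi fun x hx => ?_
  rw [mem_Ioi] at hx
  have hs : 0 < Real.sinh x := Real.sinh_pos_iff.2 hx
  rw [smul_eq_mul, abs_of_pos hs,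
    show Real.cosh x ^2 - 1 = Real.sinh x ^ 2 by nlinarith [Real.cosh_sq_sub_sinh_sq x],
    Real.sqrt_sq hs.le]
  field_simp

lemma csqrt_eval (t : ℝ) (ht : 0 ≤ t) :
    csqrt (1 + 4*Complex.I*t) =
      (Real.sqrt ((Real.sqrt (1+16*t^2) + 1)/2) : ℝ) +
        (Real.sqrt ((Real.sqrt (1+16*t^2) - 1)/2) : ℝ) * Complex.I ∧
    csqrt (1 - 4*Complex.I*t) =
      (Real.sqrt ((Real.sqrt (1+16*t^2) + 1)/2) : ℝ) -
        (Real.sqrt ((Real.sqrt (1+16*t^2) - 1)/2) : ℝ) * Complex.I := by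
  set ρ := Real.sqrt (1+16*t^2) with hρdef
  set p := Real.sqrt ((ρ + 1)/2) with hpdef
  set q := Real.sqrt ((ρ - 1)/2) with hqdef
  have hρ2 : ρ^2 = 1 + 16*t^2 := Real.sq_sqrt (by positivity)
  have hρ1 : 1 ≤ ρ := by
    nlinarith [Real.sqrt_nonneg (1+16*t^2)]
  have hp2 : p^2 = (ρ+1)/2 := Real.sq_sqrt (by linarith)
  have hq2 : q^2 = (ρ-1)/2 := Real.sq_sqrt (by linarith)
  have hp : 0 < p := Real.sqrt_pos.2 (by linarith)
  have hq : 0 ≤ q := Real.sqrt_nonneg _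
  have hpq : p * q = 2*t := by
    rw [hpdef, hqdef, ← Real.sqrt_mul (by linarith)]
    rw [show (ρ+1)/2 * ((ρ-1)/2) = (ρ^2 - 1)/4 by ring, hρ2,
      show (1 + 16*t^2 - 1)/4 = (2*t)^2 by ring]
    exact Real.sqrt_sq (by linarith)
  have harg1 : |Complex.arg ((p:ℂ) + q * Complex.I)| < π/2 := by
    rw [Complex.abs_arg_lt_pi_div_two_iff]
    left
    simpa using hp
  have harg2 : |Complex.arg ((p:ℂ) - q * Complex.I)| < π/2 := by
    rw [Complex.abs_arg_lt_pi_div_two_iff]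
    left
    simpa using hp
  have hsq1 : ((p:ℂ) + q * Complex.I)^2 = 1 + 4*Complex.I*t := by
    apply Complex.ext
    · simp [pow_two, Complex.mul_re]
      nlinarith
    · simp [pow_two, Complex.mul_im]
      nlinarith
  have hsq2 : ((p:ℂ) - q * Complex.I)^2 = 1 - 4*Complex.I*t := by
    apply Complex.ext
    · simp [pow_two, Complex.mul_re]
      nlinarith
    · simp [pow_two, Complex.mul_im]
      nlinarith
  have h2 : ((2:ℕ):ℂ)⁻¹ = (1:ℂ)/2 := by norm_num
  constructor
  · rw [csqrt, ← hsq1, ← h2]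
    apply Complex.pow_cpow_nat_inv (by norm_num)
    · rw [show ((2:ℕ):ℝ) = 2 by norm_num]
      exact (abs_lt.1 harg1).1
    · rw [show ((2:ℕ):ℝ) = 2 by norm_num]
      exact (abs_lt.1 harg1).2.le
  · rw [csqrt, ← hsq2, ← h2]
    apply Complex.pow_cpow_nat_inv (by norm_num)
    · rw [show ((2:ℕ):ℝ) = 2 by norm_num]
      exact (abs_lt.1 harg2).1
    · rw [show ((2:ℕ):ℝ) = 2 by norm_num]
      exact (abs_lt.1 harg2).2.le

lemma re_of (c x y : ℝ) :
    (((c:ℝ):ℂ) * Complex.exp ((x:ℂ) + (y:ℂ) * Complex.I)).re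
      = c * (Real.exp x * Real.cos y) := by
  rw [Complex.mul_re, Complex.exp_re, Complex.exp_im]
  simp

lemma norm_of (c x y : ℝ) :
    ‖((c:ℝ):ℂ) * Complex.exp ((x:ℂ) + (y:ℂ) * Complex.I)‖ = |c| * Real.exp x := by
  rw [norm_mul, Complex.norm_real, Complex.norm_exp]
  simp [Real.norm_eq_abs]

lemma sinh_injOn : Set.InjOn (fun ξ : ℝ => Real.sinh (2*ξ)/4) (Set.Ioi 0) := by
  intro x _ y _ h
  simp only at h
  have h2 : Real.sinh (2*x) = Real.sinh (2*y) := by linarith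
  have := Real.sinh_injective h2
  linarith

lemma sinh_image : (fun ξ : ℝ => Real.sinh (2*ξ)/4) '' (Set.Ioi 0) = Set.Ioi 0 := by
  apply Set.Subset.antisymm
  · rintro y ⟨x, hx, rfl⟩
    rw [Set.mem_Ioi] at *
    have := Real.sinh_pos_iff.2 (by linarith : (0:ℝ) < 2*x)
    simp only
    linarith
  · intro y hy
    rw [Set.mem_Ioi] at hy
    refine ⟨Real.arsinh (4*y)/2, ?_, ?_⟩
    · rw [Set.mem_Ioi]
      have := Real.arsinh_pos_iff.2 (by linarith : (0:ℝ) < 4*y)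
      linarith
    · simp only
      rw [show 2*(Real.arsinh (4*y)/2) = Real.arsinh (4*y) by ring, Real.sinh_arsinh]
      ring

lemma sinh_hasDeriv : ∀ x ∈ Set.Ioi (0:ℝ),
    HasDerivWithinAt (fun ξ : ℝ => Real.sinh (2*ξ)/4) (Real.cosh (2*x)/2) (Set.Ioi 0) x := by
  intro x _
  have h1 : HasDerivAt (fun ξ : ℝ => 2*ξ) 2 x := by
    simpa using (hasDerivAt_id x).const_mul (2:ℝ)
  have h2 := (Real.hasDerivAt_sinh (2*x)).comp x h1
  have h3 := h2.div_const 4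
  have : Real.cosh (2*x) * 2 / 4 = Real.cosh (2*x)/2 := by ring
  rw [Function.comp_def] at h3
  rw [← this]
  exact h3.hasDerivWithinAt

lemma rho_phi (ξ : ℝ) (hξ : 0 ≤ ξ) :
    Real.sqrt (1 + 16*(Real.sinh (2*ξ)/4)^2) = Real.cosh (2*ξ) ∧
    Real.sqrt ((Real.cosh (2*ξ) + 1)/2) = Real.cosh ξ ∧
    Real.sqrt ((Real.cosh (2*ξ) - 1)/2) = Real.sinh ξ := by
  have hsnn : 0 ≤ Real.sinh ξ := by
    rcases hξ.eq_or_lt with h | h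
    · simp [← h]
    · exact (Real.sinh_pos_iff.2 h).le
  refine ⟨?_, ?_, ?_⟩
  · rw [show 1 + 16*(Real.sinh (2*ξ)/4)^2 = Real.cosh (2*ξ)^2 by
      nlinarith [Real.cosh_sq_sub_sinh_sq (2*ξ)]]
    exact Real.sqrt_sq (Real.cosh_pos _).le
  · rw [show (Real.cosh (2*ξ) + 1)/2 = Real.cosh ξ^2 by
      nlinarith [Real.cosh_two_mul ξ, Real.cosh_sq ξ]]
    exact Real.sqrt_sq (Real.cosh_pos _).le
  · rw [show (Real.cosh (2*ξ) - 1)/2 = Real.sinh ξ^2 by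
      nlinarith [Real.cosh_two_mul ξ, Real.cosh_sq ξ]]
    exact Real.sqrt_sq hsnn

lemma contF (r1 r2 : ℝ) : Continuous (fun t : ℝ =>
    (1/(Real.sqrt (1 + 16*t^2) : ℂ)) * Complex.exp (-(1/(Real.sqrt 2 : ℂ)) *
      ((r1:ℂ) * csqrt (1 + 4*Complex.I*t) + (r2:ℂ) * csqrt (1 - 4*Complex.I*t)))) := by
  have hden : Continuous fun t : ℝ => (Real.sqrt (1+16*t^2) : ℂ) := by
    apply Complex.continuous_ofReal.comp
    apply Real.continuous_sqrt.comp
    fun_prop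
  have h1 : Continuous fun t : ℝ => csqrt (1 + 4*Complex.I*t) := by
    unfold csqrt
    apply Continuous.cpow
    · fun_prop
    · exact continuous_const
    · intro x
      rw [Complex.mem_slitPlane_iff]
      left
      simp
  have h2 : Continuous fun t : ℝ => csqrt (1 - 4*Complex.I*t) := by
    unfold csqrt
    apply Continuous.cpow
    · fun_prop
    · exact continuous_const
    · intro x
      rw [Complex.mem_slitPlane_iff]
      left
      simp
  apply Continuous.mul
  · apply Continuous.div continuous_const hden
    intro t
    simp only [ne_eq, Complex.ofReal_eq_zero]
    positivity
  · exact Complex.continuous_exp.comp (continuous_const.mul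
      ((continuous_const.mul h1).add (continuous_const.mul h2)))

lemma F_eval (r1 r2 t : ℝ) (ht : 0 ≤ t) :
    (1/(Real.sqrt (1 + 16*t^2) : ℂ)) *
      Complex.exp (-(1/(Real.sqrt 2 : ℂ)) *
        ((r1:ℂ) * csqrt (1 + 4*Complex.I*t) + (r2:ℂ) * csqrt (1 - 4*Complex.I*t)))
    = (((1:ℝ)/Real.sqrt (1+16*t^2) : ℝ) : ℂ) *
      Complex.exp (((-((r1+r2)/Real.sqrt 2 * Real.sqrt ((Real.sqrt (1+16*t^2)+1)/2)) : ℝ) : ℂ)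
        + ((-((r1-r2)/Real.sqrt 2 * Real.sqrt ((Real.sqrt (1+16*t^2)-1)/2)) : ℝ) : ℂ) * Complex.I) := by
  obtain ⟨h1, h2⟩ := csqrt_eval t ht
  rw [h1, h2]
  have hs2 : (0:ℝ) < Real.sqrt 2 := Real.sqrt_pos.2 (by norm_num)
  have hs2c : ((Real.sqrt 2 : ℝ) : ℂ) ≠ 0 := Complex.ofReal_ne_zero.2 hs2.ne'
  congr 1
  · push_cast
    ring
  · congr 1
    push_cast
    field_simp
    ring

theorem stmt3 (r1 r2 : ℝ) (hr1 : 0 ≤ r1) (hr2 : 0 ≤ r2) (hne : (r1, r2) ≠ (0, 0)) :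
    2 * (∫ t in Set.Ioi (0:ℝ),
        (1/(Real.sqrt (1 + 16*t^2) : ℂ)) *
          Complex.exp (-(1/(Real.sqrt 2 : ℂ)) *
            (r1 * csqrt (1 + 4*Complex.I*t) + r2 * csqrt (1 - 4*Complex.I*t)))).re
      = K0 (Real.sqrt (r1^2 + r2^2)) := by
  have hs2 : (0:ℝ) < Real.sqrt 2 := Real.sqrt_pos.2 (by norm_num)
  have har : 0 < r1 + r2 := by
    rcases hr1.eq_or_lt with h1 | h1
    · rcases hr2.eq_or_lt with h2 | h2
      · exact absurd (by rw [← h1, ← h2]) hne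
      · linarith
    · linarith
  set a := (r1+r2)/Real.sqrt 2 with ha
  set b := (r1-r2)/Real.sqrt 2 with hb
  have haa : 0 < a := div_pos har hs2
  have hab : Real.sqrt (a^2 + b^2) = Real.sqrt (r1^2 + r2^2) := by
    congr 1
    rw [ha, hb, div_pow, div_pow, Real.sq_sqrt (by norm_num : (0:ℝ) ≤ 2)]
    ring
  set F : ℝ → ℂ := fun t => (1/(Real.sqrt (1 + 16*t^2) : ℂ)) *
      Complex.exp (-(1/(Real.sqrt 2 : ℂ)) *
        ((r1:ℂ) * csqrt (1 + 4*Complex.I*t) + (r2:ℂ) * csqrt (1 - 4*Complex.I*t))) with hF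
  have hFval : ∀ t : ℝ, 0 ≤ t → F t = (((1:ℝ)/Real.sqrt (1+16*t^2) : ℝ) : ℂ) *
      Complex.exp (((-(a * Real.sqrt ((Real.sqrt (1+16*t^2)+1)/2)) : ℝ) : ℂ)
        + ((-(b * Real.sqrt ((Real.sqrt (1+16*t^2)-1)/2)) : ℝ) : ℂ) * Complex.I) := by
    intro t ht
    rw [hF]
    exact F_eval r1 r2 t ht
  have hpt : ∀ ξ ∈ Set.Ioi (0:ℝ), |Real.cosh (2*ξ)/2| • (F (Real.sinh (2*ξ)/4)).re
      = (1/2) * (Real.exp (-(a * Real.cosh ξ)) * Real.cos (b * Real.sinh ξ)) := by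
    intro ξ hξ
    rw [Set.mem_Ioi] at hξ
    have hsnn : 0 ≤ Real.sinh (2*ξ)/4 := by
      have := Real.sinh_pos_iff.2 (by linarith : (0:ℝ) < 2*ξ)
      linarith
    obtain ⟨e1, e2, e3⟩ := rho_phi ξ hξ.le
    rw [hFval _ hsnn, re_of, e1, e2, e3, Real.cos_neg]
    have hch := Real.cosh_pos (2*ξ)
    rw [smul_eq_mul, abs_of_pos (by positivity : (0:ℝ) < Real.cosh (2*ξ)/2)]
    field_simp
  have hcont : Continuous F := contF r1 r2
  have hintegrand : IntegrableOn F (Set.Ioi 0) := by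
    have himg2 := integrableOn_image_iff_integrableOn_abs_deriv_smul measurableSet_Ioi
      sinh_hasDeriv sinh_injOn F
    rw [sinh_image] at himg2
    rw [himg2]
    have hbnd : IntegrableOn (fun ξ : ℝ => (1/2) * Real.exp (-a * ξ)) (Set.Ioi 0) :=
      (exp_neg_integrableOn_Ioi 0 haa).const_mul _
    apply Integrable.mono hbnd
    · apply Continuous.aestronglyMeasurable
      apply Continuous.smul
      · exact Complex.continuous_ofReal.comp (Continuous.abs (f := fun x : ℝ => Real.cosh (2*x)/2) (by fun_prop))
      · apply hcont.comp
        fun_prop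
    · rw [ae_restrict_iff' measurableSet_Ioi]
      refine Filter.Eventually.of_forall fun ξ hξ => ?_
      rw [Set.mem_Ioi] at hξ
      have hsnn : 0 ≤ Real.sinh (2*ξ)/4 := by
        have := Real.sinh_pos_iff.2 (by linarith : (0:ℝ) < 2*ξ)
        linarith
      obtain ⟨e1, e2, e3⟩ := rho_phi ξ hξ.le
      have hch := Real.cosh_pos (2*ξ)
      rw [norm_smul, hFval _ hsnn, norm_of, e1, e2]
      have hexp : Real.exp (-(a * Real.cosh ξ)) ≤ Real.exp (-a * ξ) := by
        apply Real.exp_le_exp.2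
        have h1 : ξ ≤ Real.cosh ξ := (le_abs_self ξ).trans (abs_le_cosh ξ)
        nlinarith
      simp only [Real.norm_eq_abs, abs_abs]
      rw [abs_of_pos (by positivity : (0:ℝ) < Real.cosh (2*ξ)/2),
        abs_of_pos (by positivity : (0:ℝ) < (1:ℝ)/Real.cosh (2*ξ)),
        abs_of_pos (by positivity : (0:ℝ) < 1/2 * Real.exp (-a*ξ))]
      calc Real.cosh (2*ξ)/2 * ((1:ℝ)/Real.cosh (2*ξ) * Real.exp (-(a * Real.cosh ξ)))
          = 1/2 * Real.exp (-(a * Real.cosh ξ)) := by field_simp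
        _ ≤ 1/2 * Real.exp (-a * ξ) := by linarith [hexp]
  have hre : (∫ t in Set.Ioi (0:ℝ), F t).re = ∫ t in Set.Ioi (0:ℝ), (F t).re := by
    simpa using (integral_re hintegrand).symm
  have hsub : ∫ t in Set.Ioi (0:ℝ), (F t).re
      = ∫ ξ in Set.Ioi (0:ℝ), (1/2) * (Real.exp (-(a * Real.cosh ξ)) * Real.cos (b * Real.sinh ξ)) := by
    have himg2 := integral_image_eq_integral_abs_deriv_smul measurableSet_Ioi
      sinh_hasDeriv sinh_injOn (fun t => (F t).re)
    rw [sinh_image] at himg2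
    rw [himg2]
    exact setIntegral_congr_fun measurableSet_Ioi hpt
  calc 2 * (∫ t in Set.Ioi (0:ℝ), F t).re
      = 2 * ((1/2) * ∫ ξ in Set.Ioi (0:ℝ),
          Real.exp (-(a * Real.cosh ξ)) * Real.cos (b * Real.sinh ξ)) := by
        rw [hre, hsub, integral_const_mul]
    _ = ∫ ξ in Set.Ioi (0:ℝ), Real.exp (-(a * Real.cosh ξ)) * Real.cos (b * Real.sinh ξ) := by
        ring
    _ = ∫ ξ in Set.Ioi (0:ℝ), Real.exp (-(Real.sqrt (a^2+b^2) * Real.cosh ξ)) :=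
        cos_integral a b haa
    _ = K0 (Real.sqrt (a^2+b^2)) := (K0_eq _).symm
    _ = K0 (Real.sqrt (r1^2+r2^2)) := by rw [hab]

end
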